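/- Let p be an odd prime and α a primitive Dirichlet character modulo p³. Then there exists a nonzero residue a_α modulo p such that for all positive integers l and all integers n coprime to p, α(n + p²l)·conj(α(n)) = e^{2πi a_α l n̄ / p}, where n̄ denotes the inverse of n modulo p. -/

import Mathlib

private lemma one_add_sq_zero_pow {R : Type*} [CommRing R] (x : R) (hx : x ^ 2 = 0) :
    ∀ t : ℕ, (1 + x) ^ t = 1 + (t : R) * x := by
  intro t
  induction t with
  | zero => simp
  | succ t ih =>
    rw [pow_succ, ih]
    have h : (1 + (t : R) * x) * (1 + x) = 1 + ((t : R) + 1) * x + (t : R) * x ^ 2 := by ring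
    rw [h, hx, mul_zero, add_zero]
    push_cast
    ring

/-- Postnikov formula, special case: for `p` an odd prime and `α` primitive
mod `p³`, there is a nonzero `a_α` mod `p` with
`α(n+p²l)·conj(α(n)) = e^{2πi a_α l n̄ / p}` for all `l > 0` and `n` coprime to `p`. -/
theorem postnikov_formula (p : ℕ) (hp : p.Prime) (hodd : Odd p)
    (α : DirichletCharacter ℂ (p ^ 3)) (hα : α.IsPrimitive) :
    ∃ a : ZMod p, a ≠ 0 ∧
      ∀ (l : ℕ), 0 < l → ∀ n : ℤ, IsCoprime n (p : ℤ) →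
        α ((n : ZMod (p ^ 3)) + (p : ZMod (p ^ 3)) ^ 2 * (l : ZMod (p ^ 3))) *
            (starRingEnd ℂ) (α (n : ZMod (p ^ 3))) =
          Complex.exp (2 * Real.pi * Complex.I *
            ((a * (l : ZMod p) * ((n : ZMod p)⁻¹)).val : ℕ) / p) := by
  haveI : Fact p.Prime := ⟨hp⟩
  haveI : NeZero p := ⟨hp.pos.ne'⟩
  haveI : NeZero (p ^ 3) := ⟨pow_ne_zero _ hp.pos.ne'⟩
  set P : ZMod (p ^ 3) := (p : ZMod (p ^ 3)) with hP
  have hP3 : P ^ 3 = 0 := by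
    rw [hP, ← Nat.cast_pow, ZMod.natCast_self]
  have hx2 : (P ^ 2) ^ 2 = 0 := by
    have h : (P ^ 2) ^ 2 = P ^ 3 * P := by ring
    rw [h, hP3, zero_mul]
  set u : ZMod (p ^ 3) := 1 + P ^ 2 with hu
  have hupow : ∀ t : ℕ, u ^ t = 1 + (t : ZMod (p ^ 3)) * P ^ 2 :=
    one_add_sq_zero_pow _ hx2
  have hup1 : u ^ p = 1 := by
    rw [hupow p]
    have h : (p : ZMod (p ^ 3)) * P ^ 2 = P ^ 3 := by rw [hP]; ring
    rw [h, hP3, add_zero]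
  -- α u is a p-th root of unity
  have hαup : (α u) ^ p = 1 := by rw [← map_pow, hup1, map_one]
  have hζ := Complex.isPrimitiveRoot_exp p hp.pos.ne'
  obtain ⟨k, hk_lt, hk⟩ := hζ.eq_pow_of_pow_eq_one hαup
  -- α u ≠ 1 by primitivity
  have hune : α u ≠ 1 := by
    intro h1
    have hdvd : p ^ 2 ∣ p ^ 3 := pow_dvd_pow p (by norm_num)
    have hft : α.FactorsThrough (p ^ 2) := by
      rw [DirichletCharacter.factorsThrough_iff_ker_unitsMap hdvd]
      intro v hv
      rw [MonoidHom.mem_ker] at hv ⊢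
      have hv1 : (ZMod.castHom hdvd (ZMod (p ^ 2))) ((v : ZMod (p ^ 3))) = 1 := by
        have h2 := congrArg (Units.val) hv
        simpa [ZMod.unitsMap_def] using h2
      set m : ℕ := ((v : ZMod (p ^ 3)) - 1).val with hm
      have hmcast : ((m : ℕ) : ZMod (p ^ 2)) = 0 := by
        rw [hm, ZMod.natCast_val]
        have h3 : (ZMod.castHom hdvd (ZMod (p ^ 2))) ((v : ZMod (p ^ 3)) - 1) = 0 := by
          rw [map_sub, hv1, map_one, sub_self]
        simpa [ZMod.castHom_apply] using h3
      obtain ⟨t, ht⟩ := (ZMod.natCast_eq_zero_iff m (p ^ 2)).mp hmcast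
      have hvm : (v : ZMod (p ^ 3)) = u ^ t := by
        have h1' : (v : ZMod (p ^ 3)) = 1 + (m : ZMod (p ^ 3)) := by
          rw [hm, ZMod.natCast_val, ZMod.cast_id]
          ring
        rw [h1', ht, hupow t]
        push_cast
        rw [← hP]
        ring
      ext
      rw [MulChar.coe_toUnitHom, hvm, map_pow, h1, one_pow, Units.val_one]
    have hle : α.conductor ≤ p ^ 2 :=
      Nat.sInf_le ((DirichletCharacter.mem_conductorSet_iff _).mpr hft)
    rw [hα] at hle
    exact absurd hle (not_le.mpr (Nat.pow_lt_pow_right hp.one_lt (by norm_num)))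
  have hkne : (k : ZMod p) ≠ 0 := by
    intro h0
    have hdk : p ∣ k := (ZMod.natCast_eq_zero_iff k p).mp h0
    have hk0 : k = 0 := Nat.eq_zero_of_dvd_of_lt hdk hk_lt
    exact hune (by rw [← hk, hk0, pow_zero])
  refine ⟨(k : ZMod p), hkne, ?_⟩
  intro l hl n hn
  -- n is a unit mod p^3
  obtain ⟨x, y, hxy⟩ := hn.pow_right (n := 3)
  set N : ZMod (p ^ 3) := (n : ZMod (p ^ 3)) with hN
  have hxn : (x : ZMod (p ^ 3)) * N = 1 := by
    have h := congrArg (Int.cast : ℤ → ZMod (p ^ 3)) hxy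
    push_cast at h
    rw [← hP] at h
    rw [hP3, mul_zero, add_zero] at h
    exact h
  have hNu : IsUnit N := IsUnit.of_mul_eq_one _ (by rw [mul_comm]; exact hxn)
  have hNinv : N * N⁻¹ = 1 := ZMod.mul_inv_of_unit N hNu
  set w : ZMod (p ^ 3) := (l : ZMod (p ^ 3)) * N⁻¹ with hw
  set m : ℕ := w.val with hm
  have hmw : ((m : ℕ) : ZMod (p ^ 3)) = w := by rw [hm, ZMod.natCast_val, ZMod.cast_id]
  -- factorization
  have hfac : N + P ^ 2 * (l : ZMod (p ^ 3)) = N * (u ^ m) := by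
    rw [hupow m, hmw, hw]
    have h : N * (1 + (l : ZMod (p ^ 3)) * N⁻¹ * P ^ 2)
        = N + P ^ 2 * (l : ZMod (p ^ 3)) * (N * N⁻¹) := by ring
    rw [h, hNinv, mul_one]
  -- α N has modulus one
  have hconj : α N * (starRingEnd ℂ) (α N) = 1 := by
    have hord : N ^ orderOf hNu.unit = 1 := by
      have h2 : (hNu.unit : ZMod (p ^ 3)) ^ orderOf hNu.unit = 1 := by
        rw [← Units.val_pow_eq_pow_val, pow_orderOf_eq_one, Units.val_one]
      rwa [hNu.unit_spec] at h2
    have hαord : (α N) ^ orderOf hNu.unit = 1 := by rw [← map_pow, hord, map_one]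
    have hordpos : 0 < orderOf hNu.unit := orderOf_pos _
    have habs : ‖α N‖ = 1 :=
      Complex.norm_eq_one_of_pow_eq_one hαord hordpos.ne'
    rw [Complex.mul_conj, Complex.normSq_eq_norm_sq, habs]
    norm_num
  -- compute LHS
  have hLHS : α (N + P ^ 2 * (l : ZMod (p ^ 3))) * (starRingEnd ℂ) (α N)
      = (α u) ^ m := by
    rw [hfac, map_mul, map_pow, mul_comm (α N), mul_assoc, hconj, mul_one]
  rw [hLHS, ← hk, ← pow_mul]
  -- congruence mod p
  set V : ℕ := (((k : ZMod p) * (l : ZMod p) * ((n : ZMod p)⁻¹)).val : ℕ) with hV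
  have hcong : ((k * m : ℕ) : ZMod p) = ((V : ℕ) : ZMod p) := by
    have hVc : ((V : ℕ) : ZMod p) = (k : ZMod p) * (l : ZMod p) * ((n : ZMod p)⁻¹) := by
      rw [hV, ZMod.natCast_val, ZMod.cast_id]
    have hmc : ((m : ℕ) : ZMod p) = (l : ZMod p) * ((n : ZMod p)⁻¹) := by
      have hdvd : p ∣ p ^ 3 := dvd_pow_self p (by norm_num)
      have h1 : ((m : ℕ) : ZMod p) = (ZMod.castHom hdvd (ZMod p)) w := by
        rw [hm, ZMod.natCast_val, ZMod.castHom_apply]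
      rw [h1, hw, map_mul, map_natCast]
      congr 1
      have hNc : (ZMod.castHom hdvd (ZMod p)) N = (n : ZMod p) := by
        rw [hN, map_intCast]
      have h2 : (n : ZMod p) * (ZMod.castHom hdvd (ZMod p)) N⁻¹ = 1 := by
        rw [← hNc, ← map_mul, hNinv, map_one]
      exact eq_inv_of_mul_eq_one_right h2
    rw [hVc, Nat.cast_mul, hmc]
    ring
  -- turn congruence into equality of exponentials
  have hmod : (k * m) % p = V % p := (ZMod.natCast_eq_natCast_iff _ _ _).mp hcong
  obtain ⟨j, hj⟩ : (p : ℤ) ∣ (V : ℤ) - (k * m : ℕ) :=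
    (Nat.modEq_iff_dvd (n := p)).mp hmod
  have hpC : (p : ℂ) ≠ 0 := Nat.cast_ne_zero.mpr hp.pos.ne'
  have hjc : ((k * m : ℕ) : ℂ) = (V : ℂ) - (p : ℂ) * (j : ℂ) := by
    have h := congrArg (Int.cast : ℤ → ℂ) hj
    push_cast at h ⊢
    linear_combination -h
  rw [← Complex.exp_nat_mul]
  have key : ((k * m : ℕ) : ℂ) * (2 * (Real.pi : ℂ) * Complex.I / p)
      = 2 * (Real.pi : ℂ) * Complex.I * (V : ℕ) / p + (-j : ℤ) * (2 * (Real.pi : ℂ) * Complex.I) := by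
    rw [hjc]
    field_simp
    push_cast
    ring
  rw [key, Complex.exp_add, Complex.exp_int_mul_two_pi_mul_I, mul_one]
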